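/- Let f ∈ W_q[(A_{ñ_j}, θ_j)_{j∈ℕ}] have a tree-analysis (f_t)_{t∈T} with associated functional g_f. Then for every x ∈ c_00(ℕ), |f(x)| ≤ ‖x‖_q · max{ |f(e_k)| / |g_f(e_k)| : k ∈ supp(f) ∩ supp(x) }. -/

import Mathlib

open scoped Classical

/-- Finite Hölder: `∑ a ≤ card^(1/p) * (∑ a^q)^(1/q)` for conjugate `p,q`, incl. `q = 1`. -/
lemma aux_holder (p q : ℝ) (hq : 1 ≤ q) (hpq : 1 / p + 1 / q = 1)
    {ι : Type*} (s : Finset ι) (a : ι → ℝ) (ha : ∀ i ∈ s, 0 ≤ a i) :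
    ∑ i ∈ s, a i ≤ (s.card : ℝ) ^ (1 / p) * (∑ i ∈ s, a i ^ q) ^ (1 / q) := by
  rcases eq_or_lt_of_le hq with hq1 | hq1
  · subst hq1
    have hp0 : 1 / p = 0 := by
      have h1 : (1 : ℝ) / 1 = 1 := by norm_num
      linarith [hpq]
    rw [hp0, Real.rpow_zero, one_mul]
    simp [Real.rpow_one]
  · have hq0 : (0 : ℝ) < q := by linarith
    have h1q : 1 / q < 1 := by rw [div_lt_one hq0]; exact hq1
    have h1qpos : 0 < 1 / q := by positivity
    have hppos : 0 < p := by
      have : 0 < 1 / p := by linarith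
      exact (one_div_pos).mp this
    have hp1 : 1 < p := by
      have h1p : 1 / p < 1 := by linarith
      rwa [div_lt_one hppos] at h1p
    have hconj : Real.HolderConjugate p q := Real.holderConjugate_iff.mpr ⟨hp1, by rw [← one_div, ← one_div]; exact hpq⟩
    calc ∑ i ∈ s, a i = ∑ i ∈ s, 1 * a i := by simp
      _ ≤ (∑ i ∈ s, |(1 : ℝ)| ^ p) ^ (1 / p) * (∑ i ∈ s, |a i| ^ q) ^ (1 / q) :=
          Real.inner_le_Lp_mul_Lq (s := s) (fun _ => (1 : ℝ)) a hconj
      _ = (s.card : ℝ) ^ (1 / p) * (∑ i ∈ s, a i ^ q) ^ (1 / q) := by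
          congr 1
          · congr 1
            simp [Real.one_rpow]
          · congr 1
            exact Finset.sum_congr rfl fun i hi => by rw [abs_of_nonneg (ha i hi)]

lemma aux_support_smul (b : ℝ) (hb : b ≠ 0) (v : ℕ →₀ ℝ) : (b • v).support = v.support := by
  ext k
  simp [Finsupp.mem_support_iff, Finsupp.smul_apply, smul_eq_mul, mul_eq_zero, hb]

lemma aux_wf {T : Type*} [Fintype T] (root : T) (parent : T → Option T)
    (hroot : parent root = none)
    (hrooted : ∀ t : T, t = root ∨ Relation.TransGen (fun a b => parent b = some a) root t) :
    WellFounded (fun s t : T => parent s = some t) := by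
  classical
  set r' : T → T → Prop := fun a b => parent b = some a with hr'
  have hclosed : ∀ b u : T, Relation.TransGen r' b b → parent b = some u →
      Relation.TransGen r' u u := by
    intro b u hcyc hpar
    cases hcyc with
    | single h =>
      have hub : u = b := by rw [h] at hpar; exact (Option.some_inj.mp hpar).symm
      subst hub
      exact Relation.TransGen.single h
    | tail h1 h2 =>
      rename_i c
      have huc : u = c := by
        rw [show parent b = some c from h2] at hpar
        exact (Option.some_inj.mp hpar).symm
      subst huc
      exact Relation.TransGen.head h2 h1
  have hrootno : ¬ Relation.TransGen r' root root := by
    intro h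
    cases h with
    | single h =>
      have h' : parent root = some root := h
      rw [hroot] at h'
      exact nomatch h'
    | tail h1 h2 =>
      have h' : parent root = some _ := h2
      rw [hroot] at h'
      exact nomatch h'
  have main : ∀ t : T, Relation.TransGen r' root t → ¬ Relation.TransGen r' t t := by
    intro t h
    induction h with
    | single h => exact fun hcyc => hrootno (hclosed _ _ hcyc h)
    | tail h1 h2 ih => exact fun hcyc => ih (hclosed _ _ hcyc h2)
  have acyc : ∀ t : T, ¬ Relation.TransGen r' t t := by
    intro t
    rcases hrooted t with rfl | hp
    · exact hrootno
    · exact main t hp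
  have hirr : IsIrrefl T (Relation.TransGen fun s t : T => parent s = some t) :=
    ⟨fun t ht => acyc t ((Relation.transGen_swap).mp ht)⟩
  have htr : IsTrans T (Relation.TransGen fun s t : T => parent s = some t) :=
    ⟨fun _ _ _ h1 h2 => Relation.TransGen.trans h1 h2⟩
  have hsub : Subrelation (fun s t : T => parent s = some t)
      (Relation.TransGen fun s t : T => parent s = some t) :=
    fun {a b} h => Relation.TransGen.single h
  exact hsub.wf (Finite.wellFounded_of_trans_of_irrefl _)

lemma aux_key
    (q p : ℝ) (hq : 1 ≤ q) (hpq : 1 / p + 1 / q = 1)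
    (nn : ℕ → ℕ) (θ : ℕ → ℝ) (hn : ∀ j, 0 < nn j) (hθ : ∀ j, 0 < θ j ∧ θ j ≤ 1)
    {T : Type*} [Fintype T] (parent : T → Option T)
    (f g : T → ℕ →₀ ℝ) (jw : T → ℕ)
    (hnode : ∀ t : T,
      (∃ (k : ℕ) (ε : ℝ), (ε = 1 ∨ ε = -1) ∧ f t = Finsupp.single k ε ∧ g t = f t ∧
        ∀ s : T, parent s ≠ some t) ∨
      ((∃ s : T, parent s = some t) ∧
        (Finset.univ.filter (fun s => parent s = some t)).card ≤ nn (jw t) ∧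
        (∀ s ∈ Finset.univ.filter (fun s' => parent s' = some t),
          ∀ s' ∈ Finset.univ.filter (fun s'' => parent s'' = some t), s ≠ s' →
          (∀ i ∈ (f s).support, ∀ i' ∈ (f s').support, i < i') ∨
          (∀ i ∈ (f s).support, ∀ i' ∈ (f s').support, i' < i)) ∧
        f t = ((θ (jw t) / (nn (jw t) : ℝ) ^ (1 / p)) •
          ∑ s ∈ Finset.univ.filter (fun s => parent s = some t), f s) ∧
        g t = (((nn (jw t) : ℝ) ^ (1 / p))⁻¹ •
          ∑ s ∈ Finset.univ.filter (fun s => parent s = some t), g s)))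
    (hwf : WellFounded (fun s t : T => parent s = some t)) :
    ∀ t : T, (f t).support = (g t).support ∧ (∀ k, |f t k| ≤ |g t k|) ∧
      ∀ w : ℕ → ℝ, (∀ k, 0 ≤ w k) →
        ∑ k ∈ (g t).support, |g t k| * w k ≤ (∑ k ∈ (g t).support, w k ^ q) ^ (1 / q) := by
  classical
  have hq0 : (0 : ℝ) < q := lt_of_lt_of_le zero_lt_one hq
  have hqne : q ≠ 0 := ne_of_gt hq0
  have h1p_nonneg : 0 ≤ 1 / p := by
    have h1 : 1 / q ≤ 1 := by rw [div_le_one hq0]; exact hq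
    linarith
  have step : ∀ t : T,
      (∀ s : T, parent s = some t →
        (f s).support = (g s).support ∧ (∀ k, |f s k| ≤ |g s k|) ∧
        ∀ w : ℕ → ℝ, (∀ k, 0 ≤ w k) →
          ∑ k ∈ (g s).support, |g s k| * w k ≤ (∑ k ∈ (g s).support, w k ^ q) ^ (1 / q)) →
      (f t).support = (g t).support ∧ (∀ k, |f t k| ≤ |g t k|) ∧
      ∀ w : ℕ → ℝ, (∀ k, 0 ≤ w k) →
        ∑ k ∈ (g t).support, |g t k| * w k ≤ (∑ k ∈ (g t).support, w k ^ q) ^ (1 / q) := by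
    intro t ih
    rcases hnode t with ⟨k0, ε, hε, hfE, hgf, -⟩ | ⟨-, hcard, horder, hft, hgt⟩
    · -- leaf
      have hε0 : ε ≠ 0 := by rcases hε with rfl | rfl <;> norm_num
      have hεabs : |ε| = 1 := by rcases hε with rfl | rfl <;> norm_num
      refine ⟨by rw [hgf], fun k => by rw [hgf], ?_⟩
      intro w hw
      rw [hgf, hfE, Finsupp.support_single_ne_zero _ hε0,
        Finset.sum_singleton, Finset.sum_singleton, Finsupp.single_eq_same, hεabs, one_mul]
      have hrw : (w k0 ^ q) ^ (1 / q) = w k0 := by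
        rw [← Real.rpow_mul (hw k0), mul_one_div_cancel hqne, Real.rpow_one]
      rw [hrw]
    · -- node
      set C := Finset.univ.filter (fun s => parent s = some t) with hC
      have ihs : ∀ s ∈ C,
          (f s).support = (g s).support ∧ (∀ k, |f s k| ≤ |g s k|) ∧
          ∀ w : ℕ → ℝ, (∀ k, 0 ≤ w k) →
            ∑ k ∈ (g s).support, |g s k| * w k ≤ (∑ k ∈ (g s).support, w k ^ q) ^ (1 / q) := by
        intro s hs
        exact ih s (by simpa [hC] using hs)
      have hnpos : (0 : ℝ) < (nn (jw t) : ℝ) := by exact_mod_cast hn (jw t)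
      have hcoef_pos : (0 : ℝ) < (nn (jw t) : ℝ) ^ (1 / p) := Real.rpow_pos_of_pos hnpos _
      have hc_ne : ((nn (jw t) : ℝ) ^ (1 / p))⁻¹ ≠ 0 := inv_ne_zero (ne_of_gt hcoef_pos)
      have hθpos := (hθ (jw t)).1
      have hθle := (hθ (jw t)).2
      have hfc_ne : θ (jw t) / (nn (jw t) : ℝ) ^ (1 / p) ≠ 0 := by positivity
      have hdisj : ∀ s ∈ C, ∀ s' ∈ C, s ≠ s' → Disjoint (f s).support (f s').support := by
        intro s hs s' hs' hne
        rcases horder s hs s' hs' hne with h | h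
        · rw [Finset.disjoint_left]
          intro i hi hi'
          exact lt_irrefl i (h i hi i hi')
        · rw [Finset.disjoint_left]
          intro i hi hi'
          exact lt_irrefl i (h i hi i hi')
      have hgdisj : ∀ s ∈ C, ∀ s' ∈ C, s ≠ s' → Disjoint (g s).support (g s').support := by
        intro s hs s' hs' hne
        rw [← (ihs s hs).1, ← (ihs s' hs').1]
        exact hdisj s hs s' hs' hne
      have hsupf : (∑ s ∈ C, f s).support = C.biUnion (fun s => (f s).support) := by
        rw [← Finset.sum_attach C f]
        rw [Finsupp.support_sum_eq_biUnion]
        · ext k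
          simp [Finset.mem_biUnion]
        · intro s1 s2 hne
          exact hdisj s1 s1.2 s2 s2.2 (fun h => hne (Subtype.ext h))
      have hsupg : (∑ s ∈ C, g s).support = C.biUnion (fun s => (g s).support) := by
        rw [← Finset.sum_attach C g]
        rw [Finsupp.support_sum_eq_biUnion]
        · ext k
          simp [Finset.mem_biUnion]
        · intro s1 s2 hne
          exact hgdisj s1 s1.2 s2 s2.2 (fun h => hne (Subtype.ext h))
      have hsupp_f_t : (f t).support = C.biUnion (fun s => (f s).support) := by
        rw [hft, aux_support_smul _ hfc_ne, hsupf]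
      have hsupp_g_t : (g t).support = C.biUnion (fun s => (g s).support) := by
        rw [hgt, aux_support_smul _ hc_ne, hsupg]
      have hsupp_eq : (f t).support = (g t).support := by
        rw [hsupp_f_t, hsupp_g_t]
        exact Finset.biUnion_congr rfl (fun s hs => (ihs s hs).1)
      have hpt : ∀ k, |f t k| ≤ |g t k| := by
        intro k
        by_cases hk : k ∈ (f t).support
        · have hk' := hk
          rw [hsupp_f_t] at hk'
          obtain ⟨s0, hs0C, hk0⟩ := Finset.mem_biUnion.mp hk'
          have hk0g : k ∈ (g s0).support := by rw [← (ihs s0 hs0C).1]; exact hk0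
          have hfsum : (∑ s ∈ C, f s) k = f s0 k := by
            rw [Finsupp.finset_sum_apply]
            apply Finset.sum_eq_single_of_mem s0 hs0C
            intro s' hs' hne
            exact Finsupp.notMem_support_iff.mp
              (fun hmem => (Finset.disjoint_left.mp (hdisj s' hs' s0 hs0C hne)) hmem hk0)
          have hgsum : (∑ s ∈ C, g s) k = g s0 k := by
            rw [Finsupp.finset_sum_apply]
            apply Finset.sum_eq_single_of_mem s0 hs0C
            intro s' hs' hne
            exact Finsupp.notMem_support_iff.mp
              (fun hmem => (Finset.disjoint_left.mp (hgdisj s' hs' s0 hs0C hne)) hmem hk0g)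
          rw [hft, hgt, Finsupp.smul_apply, Finsupp.smul_apply, hfsum, hgsum,
            smul_eq_mul, smul_eq_mul, abs_mul, abs_mul]
          have h1 : |θ (jw t) / (nn (jw t) : ℝ) ^ (1 / p)| ≤ |((nn (jw t) : ℝ) ^ (1 / p))⁻¹| := by
            rw [abs_of_pos (by positivity), abs_of_pos (by positivity)]
            rw [div_eq_mul_inv]
            have hinv : (0 : ℝ) < ((nn (jw t) : ℝ) ^ (1 / p))⁻¹ := by positivity
            nlinarith
          exact mul_le_mul h1 ((ihs s0 hs0C).2.1 k) (abs_nonneg _) (abs_nonneg _)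
        · rw [Finsupp.notMem_support_iff.mp hk]
          simpa using abs_nonneg (g t k)
      refine ⟨hsupp_eq, hpt, ?_⟩
      intro w hw
      set c : ℝ := ((nn (jw t) : ℝ) ^ (1 / p))⁻¹ with hcdef
      have hcpos : 0 < c := by positivity
      have hgdisjP : (↑C : Set T).PairwiseDisjoint (fun s => (g s).support) :=
        fun s hs s' hs' hne => hgdisj s hs s' hs' hne
      have hval : ∀ s ∈ C, ∀ k ∈ (g s).support, g t k = c * g s k := by
        intro s hs k hk
        rw [hgt, Finsupp.smul_apply, smul_eq_mul, Finsupp.finset_sum_apply]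
        congr 1
        apply Finset.sum_eq_single_of_mem s hs
        intro s' hs' hne
        exact Finsupp.notMem_support_iff.mp
          (fun hmem => (Finset.disjoint_left.mp (hgdisj s' hs' s hs hne)) hmem hk)
      have hXnn : 0 ≤ (∑ s ∈ C, ∑ k ∈ (g s).support, w k ^ q) ^ (1 / q) := by
        apply Real.rpow_nonneg
        apply Finset.sum_nonneg
        intro s hs
        exact Finset.sum_nonneg fun k hk => Real.rpow_nonneg (hw k) q
      have hcardle : ((C.card : ℝ)) ^ (1 / p) ≤ ((nn (jw t) : ℝ)) ^ (1 / p) := by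
        apply Real.rpow_le_rpow (by positivity) _ h1p_nonneg
        exact_mod_cast hcard
      have hc1 : c * (C.card : ℝ) ^ (1 / p) ≤ 1 := by
        have := mul_le_mul_of_nonneg_left hcardle hcpos.le
        rwa [hcdef, inv_mul_cancel₀ (ne_of_gt hcoef_pos)] at this
      rw [hsupp_g_t, Finset.sum_biUnion hgdisjP, Finset.sum_biUnion hgdisjP]
      calc ∑ s ∈ C, ∑ k ∈ (g s).support, |g t k| * w k
          = c * ∑ s ∈ C, ∑ k ∈ (g s).support, |g s k| * w k := by
            rw [Finset.mul_sum]
            refine Finset.sum_congr rfl fun s hs => ?_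
            rw [Finset.mul_sum]
            refine Finset.sum_congr rfl fun k hk => ?_
            rw [hval s hs k hk, abs_mul, abs_of_pos hcpos]
            ring
        _ ≤ c * ∑ s ∈ C, (∑ k ∈ (g s).support, w k ^ q) ^ (1 / q) := by
            apply mul_le_mul_of_nonneg_left _ hcpos.le
            exact Finset.sum_le_sum fun s hs => (ihs s hs).2.2 w hw
        _ ≤ c * ((C.card : ℝ) ^ (1 / p) *
              (∑ s ∈ C, ((∑ k ∈ (g s).support, w k ^ q) ^ (1 / q)) ^ q) ^ (1 / q)) := by
            apply mul_le_mul_of_nonneg_left _ hcpos.le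
            exact aux_holder p q hq hpq C _
              (fun s hs => Real.rpow_nonneg
                (Finset.sum_nonneg fun k hk => Real.rpow_nonneg (hw k) q) _)
        _ = c * ((C.card : ℝ) ^ (1 / p) *
              (∑ s ∈ C, ∑ k ∈ (g s).support, w k ^ q) ^ (1 / q)) := by
            have hpow : ∑ s ∈ C, ((∑ k ∈ (g s).support, w k ^ q) ^ (1 / q)) ^ q
                = ∑ s ∈ C, ∑ k ∈ (g s).support, w k ^ q := by
              refine Finset.sum_congr rfl fun s hs => ?_
              rw [← Real.rpow_mul
                (Finset.sum_nonneg fun k hk => Real.rpow_nonneg (hw k) q),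
                one_div_mul_cancel hqne, Real.rpow_one]
            rw [hpow]
        _ ≤ (∑ s ∈ C, ∑ k ∈ (g s).support, w k ^ q) ^ (1 / q) := by
            rw [← mul_assoc]
            nlinarith [hXnn, hc1, mul_le_mul_of_nonneg_right hc1 hXnn]
  intro t
  exact hwf.induction t (fun t' ih => step t' (fun s hs => ih s hs))

/-- for `f` in the norming set of a `q`-mixed-Tsirelson space
with a tree-analysis `(f_t)` and associated functional `g_f = g_root`,
`|f(x)| ≤ ‖x‖_q · max { |f(e_k)|/|g_f(e_k)| : k ∈ supp f ∩ supp x }`. -/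
theorem stmt_11
    (q p : ℝ) (hq : 1 ≤ q) (hpq : 1 / p + 1 / q = 1)
    (nn : ℕ → ℕ) (θ : ℕ → ℝ) (hn : ∀ j, 0 < nn j) (hθ : ∀ j, 0 < θ j ∧ θ j ≤ 1)
    {T : Type*} [Fintype T] (root : T) (parent : T → Option T)
    (hroot : parent root = none)
    (hrooted : ∀ t : T, t = root ∨ Relation.TransGen (fun a b => parent b = some a) root t)
    (f g : T → ℕ →₀ ℝ) (jw : T → ℕ)
    (hnode : ∀ t : T,
      (∃ (k : ℕ) (ε : ℝ), (ε = 1 ∨ ε = -1) ∧ f t = Finsupp.single k ε ∧ g t = f t ∧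
        ∀ s : T, parent s ≠ some t) ∨
      ((∃ s : T, parent s = some t) ∧
        (Finset.univ.filter (fun s => parent s = some t)).card ≤ nn (jw t) ∧
        (∀ s ∈ Finset.univ.filter (fun s' => parent s' = some t),
          ∀ s' ∈ Finset.univ.filter (fun s'' => parent s'' = some t), s ≠ s' →
          (∀ i ∈ (f s).support, ∀ i' ∈ (f s').support, i < i') ∨
          (∀ i ∈ (f s).support, ∀ i' ∈ (f s').support, i' < i)) ∧
        f t = ((θ (jw t) / (nn (jw t) : ℝ) ^ (1 / p)) •
          ∑ s ∈ Finset.univ.filter (fun s => parent s = some t), f s) ∧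
        g t = (((nn (jw t) : ℝ) ^ (1 / p))⁻¹ •
          ∑ s ∈ Finset.univ.filter (fun s => parent s = some t), g s))) :
    ∀ (x : ℕ →₀ ℝ) (M : ℝ), 0 ≤ M →
      (∀ k ∈ (f root).support ∩ x.support, |(f root) k| / |(g root) k| ≤ M) →
      |(f root).sum fun k c => c * x k| ≤
        (∑ k ∈ x.support, |x k| ^ q) ^ (1 / q) * M := by
  classical
  have hq0 : (0 : ℝ) < q := lt_of_lt_of_le zero_lt_one hq
  have hqne : q ≠ 0 := ne_of_gt hq0
  obtain ⟨hsupp, hpt, hbound⟩ :=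
    aux_key q p hq hpq nn θ hn hθ parent f g jw hnode
      (aux_wf root parent hroot hrooted) root
  intro x M hM hMk
  rw [Finsupp.sum]
  calc |∑ k ∈ (f root).support, f root k * x k|
      ≤ ∑ k ∈ (f root).support, |f root k * x k| := Finset.abs_sum_le_sum_abs _ _
    _ = ∑ k ∈ (f root).support, |f root k| * |x k| := by
        refine Finset.sum_congr rfl fun k hk => abs_mul _ _
    _ ≤ ∑ k ∈ (f root).support, M * (|g root k| * |x k|) := by
        apply Finset.sum_le_sum
        intro k hk
        by_cases hx : x k = 0
        · simp [hx]
        · have hkx : k ∈ (f root).support ∩ x.support :=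
            Finset.mem_inter.mpr ⟨hk, Finsupp.mem_support_iff.mpr hx⟩
          have hgk : g root k ≠ 0 := by
            have hkg : k ∈ (g root).support := hsupp ▸ hk
            exact Finsupp.mem_support_iff.mp hkg
          have habs : 0 < |g root k| := abs_pos.mpr hgk
          have hdiv := hMk k hkx
          have hfk : |f root k| ≤ M * |g root k| := by
            rw [div_le_iff₀ habs] at hdiv
            linarith
          calc |f root k| * |x k| ≤ (M * |g root k|) * |x k| :=
                mul_le_mul_of_nonneg_right hfk (abs_nonneg _)
            _ = M * (|g root k| * |x k|) := by ring
    _ = M * ∑ k ∈ (g root).support, |g root k| * |x k| := by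
        rw [← Finset.mul_sum, hsupp]
    _ ≤ M * (∑ k ∈ (g root).support, |x k| ^ q) ^ (1 / q) := by
        apply mul_le_mul_of_nonneg_left _ hM
        exact hbound (fun k => |x k|) (fun k => abs_nonneg _)
    _ ≤ M * (∑ k ∈ x.support, |x k| ^ q) ^ (1 / q) := by
        apply mul_le_mul_of_nonneg_left _ hM
        apply Real.rpow_le_rpow
          (Finset.sum_nonneg fun k _ => Real.rpow_nonneg (abs_nonneg _) q) _
          (by positivity)
        have h1 : ∑ k ∈ (g root).support, |x k| ^ q
            = ∑ k ∈ (g root).support ∩ x.support, |x k| ^ q := by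
          symm
          apply Finset.sum_subset Finset.inter_subset_left
          intro k hk hk'
          have hx0 : x k = 0 := by
            by_contra hx
            exact hk' (Finset.mem_inter.mpr ⟨hk, Finsupp.mem_support_iff.mpr hx⟩)
          rw [hx0, abs_zero, Real.zero_rpow hqne]
        rw [h1]
        exact Finset.sum_le_sum_of_subset_of_nonneg Finset.inter_subset_right
          (fun k _ _ => Real.rpow_nonneg (abs_nonneg _) q)
    _ = (∑ k ∈ x.support, |x k| ^ q) ^ (1 / q) * M := mul_comm _ _
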